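/- Let X and Y be disjoint finite vertex sets with |X| ≥ 5 and |Y| ≥ 5, and let H be a P_6^2-free graph on vertex set X ∪ Y such that all but at most two of the pairs {x, y} with x ∈ X and y ∈ Y are edges of H. Then neither the induced subgraph H[X] nor the induced subgraph H[Y] contains a path on four vertices. -/

import Mathlib

open SimpleGraph

/-- A graph is `P6SqFree` if it has no subgraph isomorphic to the square of the
path on six vertices (vertices `v_1, …, v_6`, edges `v_i v_j` whenever `j - i ≤ 2`). -/
def P6SqFree {V : Type*} (G : SimpleGraph V) : Prop :=
  ¬ ∃ f : Fin 6 → V, Function.Injective f ∧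
      ∀ i j : Fin 6, (i : ℕ) < (j : ℕ) → (j : ℕ) ≤ (i : ℕ) + 2 → G.Adj (f i) (f j)

/-- The number of triangles of a finite graph. -/
noncomputable def triCount {V : Type*} [Fintype V] [DecidableEq V] (G : SimpleGraph V) : ℕ :=
  have : DecidableRel G.Adj := Classical.decRel _
  (G.cliqueFinset 3).card

/-- The number of edges of a finite graph. -/
noncomputable def edgeCount {V : Type*} (G : SimpleGraph V) : ℕ :=
  G.edgeSet.ncard

/-- The function `g` from the paper. -/
def gfun (n : ℕ) : ℕ :=
  if n % 6 = 2 ∨ n % 6 = 3 then n / 6 - 1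
  else if n % 6 = 5 then n / 6 + 1
  else n / 6

/-- The graph `H_n^i`: complete bipartite graph between `{0,…,i-1}` and the rest,
together with `i/3` pairwise vertex-disjoint triangles inside the first part
(grouping the first part into consecutive triples). -/
def Hgraph (n i : ℕ) : SimpleGraph (Fin n) where
  Adj v w := v ≠ w ∧
    ((v.val < i ∧ ¬ w.val < i) ∨ (¬ v.val < i ∧ w.val < i) ∨
     (v.val < i ∧ w.val < i ∧ v.val / 3 = w.val / 3))
  symm := by
    refine ⟨?_⟩
    rintro v w ⟨hne, h⟩
    refine ⟨hne.symm, ?_⟩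
    rcases h with h | h | h
    · exact Or.inr (Or.inl ⟨h.2, h.1⟩)
    · exact Or.inl ⟨h.2, h.1⟩
    · exact Or.inr (Or.inr ⟨h.2.1, h.1, h.2.2.symm⟩)
  loopless := by refine ⟨?_⟩; intro v h; exact h.1 rfl

lemma buildP6 {V : Type*} (H : SimpleGraph V) (a y1 b c y2 d : V)
    (h01 : a ≠ y1) (h02 : a ≠ b) (h03 : a ≠ c) (h04 : a ≠ y2) (h05 : a ≠ d)
    (h12 : y1 ≠ b) (h13 : y1 ≠ c) (h14 : y1 ≠ y2) (h15 : y1 ≠ d)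
    (h23 : b ≠ c) (h24 : b ≠ y2) (h25 : b ≠ d)
    (h34 : c ≠ y2) (h35 : c ≠ d) (h45 : y2 ≠ d)
    (e01 : H.Adj a y1) (e02 : H.Adj a b) (e12 : H.Adj y1 b) (e13 : H.Adj y1 c)
    (e23 : H.Adj b c) (e24 : H.Adj b y2) (e34 : H.Adj c y2) (e35 : H.Adj c d)
    (e45 : H.Adj y2 d) : ¬ P6SqFree H := by
  intro hf
  apply hf
  refine ⟨fun i => [a, y1, b, c, y2, d].get (Fin.cast (by simp) i), ?_, ?_⟩
  · have hnd : ([a, y1, b, c, y2, d]).Nodup := by simp_all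
    intro i j hij
    have := List.nodup_iff_injective_get.mp hnd hij
    simpa [Fin.ext_iff] using this
  · intro i j h1 h2
    fin_cases i <;> fin_cases j <;>
      first
      | exact e01 | exact e02 | exact e12 | exact e13 | exact e23
      | exact e24 | exact e34 | exact e35 | exact e45
      | exact absurd h1 (by decide) | exact absurd h2 (by decide)

/-- If `H` is `P_6^2`-free on vertex set `X ∪ Y` (disjoint parts of size `≥ 5`) and all
but at most two cross pairs are edges, then neither `H[X]` nor `H[Y]` contains a path on
four vertices. -/
theorem stmt7 {V : Type*} [Fintype V] [DecidableEq V] (H : SimpleGraph V)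
    (X Y : Finset V) (hdisj : Disjoint X Y) (hcover : X ∪ Y = Finset.univ)
    (hX : 5 ≤ X.card) (hY : 5 ≤ Y.card) (hfree : P6SqFree H)
    (hmiss : {p : V × V | p.1 ∈ X ∧ p.2 ∈ Y ∧ ¬ H.Adj p.1 p.2}.ncard ≤ 2) :
    (¬ ∃ a b c d : V, a ∈ X ∧ b ∈ X ∧ c ∈ X ∧ d ∈ X ∧
        List.Pairwise (· ≠ ·) [a, b, c, d] ∧ H.Adj a b ∧ H.Adj b c ∧ H.Adj c d) ∧
    (¬ ∃ a b c d : V, a ∈ Y ∧ b ∈ Y ∧ c ∈ Y ∧ d ∈ Y ∧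
        List.Pairwise (· ≠ ·) [a, b, c, d] ∧ H.Adj a b ∧ H.Adj b c ∧ H.Adj c d) := by
  classical
  set M : Set (V × V) := {p : V × V | p.1 ∈ X ∧ p.2 ∈ Y ∧ ¬ H.Adj p.1 p.2} with hM
  have hMfin : M.Finite := Set.toFinite _
  have hMc : hMfin.toFinset.card ≤ 2 := by
    rwa [Set.ncard_eq_toFinset_card _ hMfin] at hmiss
  constructor
  · rintro ⟨a, b, c, d, ha, hb, hc, hd, hpw, eab, ebc, ecd⟩
    simp only [List.pairwise_cons] at hpw
    obtain ⟨hp1, hp2, hp3, -⟩ := hpw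
    have hab : a ≠ b := hp1 b (by simp)
    have hac : a ≠ c := hp1 c (by simp)
    have had : a ≠ d := hp1 d (by simp)
    have hbc : b ≠ c := hp2 c (by simp)
    have hbd : b ≠ d := hp2 d (by simp)
    have hcd : c ≠ d := hp3 d (by simp)
    set B : Finset V := hMfin.toFinset.image Prod.snd with hB
    have hBc : B.card ≤ 2 := le_trans Finset.card_image_le hMc
    have hcard : 1 < (Y \ B).card := by
      have h1 := Finset.le_card_sdiff B Y
      omega
    obtain ⟨y1, hy1, y2, hy2, hne⟩ := Finset.one_lt_card.mp hcard
    have good : ∀ y ∈ Y \ B, ∀ x ∈ X, H.Adj x y := by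
      intro y hy x hx
      rw [Finset.mem_sdiff] at hy
      by_contra hadj
      exact hy.2 (Finset.mem_image.mpr ⟨(x, y), hMfin.mem_toFinset.mpr
        ⟨hx, hy.1, hadj⟩, rfl⟩)
    have hy1Y : y1 ∈ Y := (Finset.mem_sdiff.mp hy1).1
    have hy2Y : y2 ∈ Y := (Finset.mem_sdiff.mp hy2).1
    have hXY : ∀ x ∈ X, ∀ y ∈ Y, x ≠ y := by
      intro x hx y hy h; exact Finset.disjoint_left.mp hdisj hx (h ▸ hy)
    exact buildP6 H a y1 b c y2 d
      (hXY a ha y1 hy1Y) hab hac (hXY a ha y2 hy2Y) had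
      (Ne.symm (hXY b hb y1 hy1Y)) (Ne.symm (hXY c hc y1 hy1Y)) hne
      (Ne.symm (hXY d hd y1 hy1Y)) hbc
      (hXY b hb y2 hy2Y) hbd (hXY c hc y2 hy2Y) hcd (Ne.symm (hXY d hd y2 hy2Y))
      (good y1 hy1 a ha) eab (good y1 hy1 b hb).symm (good y1 hy1 c hc).symm
      ebc (good y2 hy2 b hb) (good y2 hy2 c hc) ecd (good y2 hy2 d hd).symm
      hfree
  · rintro ⟨a, b, c, d, ha, hb, hc, hd, hpw, eab, ebc, ecd⟩
    simp only [List.pairwise_cons] at hpw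
    obtain ⟨hp1, hp2, hp3, -⟩ := hpw
    have hab : a ≠ b := hp1 b (by simp)
    have hac : a ≠ c := hp1 c (by simp)
    have had : a ≠ d := hp1 d (by simp)
    have hbc : b ≠ c := hp2 c (by simp)
    have hbd : b ≠ d := hp2 d (by simp)
    have hcd : c ≠ d := hp3 d (by simp)
    set B : Finset V := hMfin.toFinset.image Prod.fst with hB
    have hBc : B.card ≤ 2 := le_trans Finset.card_image_le hMc
    have hcard : 1 < (X \ B).card := by
      have h1 := Finset.le_card_sdiff B X
      omega
    obtain ⟨x1, hx1, x2, hx2, hne⟩ := Finset.one_lt_card.mp hcard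
    have good : ∀ x ∈ X \ B, ∀ y ∈ Y, H.Adj x y := by
      intro x hx y hy
      rw [Finset.mem_sdiff] at hx
      by_contra hadj
      exact hx.2 (Finset.mem_image.mpr ⟨(x, y), hMfin.mem_toFinset.mpr
        ⟨hx.1, hy, hadj⟩, rfl⟩)
    have hx1X : x1 ∈ X := (Finset.mem_sdiff.mp hx1).1
    have hx2X : x2 ∈ X := (Finset.mem_sdiff.mp hx2).1
    have hXY : ∀ x ∈ X, ∀ y ∈ Y, x ≠ y := by
      intro x hx y hy h; exact Finset.disjoint_left.mp hdisj hx (h ▸ hy)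
    exact buildP6 H a x1 b c x2 d
      (Ne.symm (hXY x1 hx1X a ha)) hab hac (Ne.symm (hXY x2 hx2X a ha)) had
      (hXY x1 hx1X b hb) (hXY x1 hx1X c hc) hne (hXY x1 hx1X d hd)
      hbc (Ne.symm (hXY x2 hx2X b hb)) hbd (Ne.symm (hXY x2 hx2X c hc))
      hcd (hXY x2 hx2X d hd)
      (good x1 hx1 a ha).symm eab (good x1 hx1 b hb) (good x1 hx1 c hc)
      ebc (good x2 hx2 b hb).symm (good x2 hx2 c hc).symm ecd (good x2 hx2 d hd)
      hfree
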